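/- Let (x_k) be the iterates of the randomized Kaczmarz method with mismatched adjoint for a consistent system A x̂ = b, with indices i_k chosen i.i.d. with probabilities pᵢ. If λ := λ_min(VᵀDA + AᵀDV − AᵀSDA) > 0 then for all k, E[‖x_{k+1} − x̂‖²] ≤ (1 − λ)·E[‖x_k − x̂‖²], and hence E[‖x_k − x̂‖²] ≤ (1 − λ)^k·‖x_0 − x̂‖². -/

import Mathlib

open Matrix Finset

noncomputable def enorm' {n : ℕ} (v : Fin n → ℝ) : ℝ := Real.sqrt (v ⬝ᵥ v)

/-- Iterates of the randomized Kaczmarz method with mismatched adjoint along a given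
sequence of chosen row indices `ω`. -/
noncomputable def rkmaIter {m n : ℕ} (A V : Matrix (Fin m) (Fin n) ℝ) (b : Fin m → ℝ)
    (x0 : Fin n → ℝ) : (k : ℕ) → (Fin k → Fin m) → (Fin n → ℝ)
  | 0, _ => x0
  | k + 1, ω =>
      let x := rkmaIter A V b x0 k (fun j => ω j.castSucc)
      let i := ω (Fin.last k)
      x - ((A i ⬝ᵥ x - b i) / (A i ⬝ᵥ V i)) • V i

lemma dotProduct_self_nonneg' {n : ℕ} (v : Fin n → ℝ) : 0 ≤ v ⬝ᵥ v :=
  Finset.sum_nonneg fun i _ => mul_self_nonneg _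

lemma enorm'_sq {n : ℕ} (v : Fin n → ℝ) : (enorm' v) ^ 2 = v ⬝ᵥ v :=
  Real.sq_sqrt (dotProduct_self_nonneg' v)

/-- Rayleigh-type lower bound on the quadratic form of a real symmetric matrix. -/
lemma rayleigh_low {n : ℕ} {M : Matrix (Fin n) (Fin n) ℝ} (hM : M.IsHermitian)
    (x : Fin n → ℝ) : (⨅ j, hM.eigenvalues j) * (x ⬝ᵥ x) ≤ x ⬝ᵥ M.mulVec x := by
  set U : Matrix (Fin n) (Fin n) ℝ := (hM.eigenvectorUnitary : Matrix (Fin n) (Fin n) ℝ) with hU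
  set y : Fin n → ℝ := star U *ᵥ x with hy
  have hyU : x ᵥ* U = y := by
    rw [hy, Matrix.star_eq_conjTranspose, Matrix.conjTranspose_eq_transpose_of_trivial,
      mulVec_transpose]
  have hquad : x ⬝ᵥ M.mulVec x = ∑ j, hM.eigenvalues j * (y j)^2 := by
    conv_lhs => rw [hM.spectral_theorem, Unitary.conjStarAlgAut_apply]
    rw [← mulVec_mulVec, ← mulVec_mulVec, dotProduct_mulVec, hyU]
    simp only [dotProduct, mulVec_diagonal, Function.comp_apply, RCLike.ofReal_real_eq_id, id]
    exact Finset.sum_congr rfl fun j _ => by ring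
  have hnorm : x ⬝ᵥ x = ∑ j, (y j)^2 := by
    have h2 : U * star U = 1 := by
      have := hM.eigenvectorUnitary.2
      rw [Matrix.mem_unitaryGroup_iff] at this
      exact this
    have h3 : x ⬝ᵥ x = y ⬝ᵥ y := by
      have h4 : x ⬝ᵥ ((U * star U) *ᵥ x) = y ⬝ᵥ y := by
        rw [← mulVec_mulVec, dotProduct_mulVec, hyU, ← hy]
      rwa [h2, one_mulVec] at h4
    rw [h3]; simp [dotProduct, sq]
  rw [hquad, hnorm, Finset.mul_sum]
  refine Finset.sum_le_sum fun j _ => ?_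
  have hle : (⨅ j, hM.eigenvalues j) ≤ hM.eigenvalues j :=
    ciInf_le (Set.Finite.bddBelow (Set.finite_range _)) j
  exact mul_le_mul_of_nonneg_right hle (sq_nonneg _)

lemma quadFormSum {m n : ℕ} (B C : Matrix (Fin m) (Fin n) ℝ) (d : Fin m → ℝ)
    (x y : Fin n → ℝ) :
    x ⬝ᵥ (Bᵀ * Matrix.diagonal d * C).mulVec y = ∑ i, d i * (B i ⬝ᵥ x) * (C i ⬝ᵥ y) := by
  rw [Matrix.mul_assoc, ← mulVec_mulVec, dotProduct_mulVec, vecMul_transpose, ← mulVec_mulVec]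
  simp only [dotProduct, mulVec_diagonal]
  refine Finset.sum_congr rfl fun i _ => ?_
  show (B *ᵥ x) i * (d i * (C *ᵥ y) i) = _
  have h1 : (B *ᵥ x) i = B i ⬝ᵥ x := rfl
  have h2 : (C *ᵥ y) i = C i ⬝ᵥ y := rfl
  rw [h1, h2]; simp only [dotProduct]; ring

/-- The key one-step identity. -/
lemma rkma_step_id {m n : ℕ} (A V : Matrix (Fin m) (Fin n) ℝ) (p : Fin m → ℝ)
    (hps : ∑ i, p i = 1) (hav : ∀ i, 0 < A i ⬝ᵥ V i)
    (D S : Matrix (Fin m) (Fin m) ℝ)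
    (hD : D = Matrix.diagonal (fun i => p i / (A i ⬝ᵥ V i)))
    (hS : S = Matrix.diagonal (fun i => (enorm' (V i)) ^ 2 / (A i ⬝ᵥ V i)))
    (e : Fin n → ℝ) :
    ∑ i, p i * ((e - ((A i ⬝ᵥ e) / (A i ⬝ᵥ V i)) • V i) ⬝ᵥ
        (e - ((A i ⬝ᵥ e) / (A i ⬝ᵥ V i)) • V i))
      = e ⬝ᵥ e - e ⬝ᵥ (Vᵀ * D * A + Aᵀ * D * V - Aᵀ * S * D * A).mulVec e := by
  have hSD : Aᵀ * S * D * A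
      = Aᵀ * Matrix.diagonal (fun i => (enorm' (V i)) ^ 2 / (A i ⬝ᵥ V i) * (p i / (A i ⬝ᵥ V i))) * A := by
    rw [hS, hD, Matrix.mul_assoc Aᵀ, Matrix.diagonal_mul_diagonal]
  rw [sub_mulVec, add_mulVec, dotProduct_sub, dotProduct_add, hSD, hD,
    quadFormSum V A _ e e, quadFormSum A V _ e e, quadFormSum A A _ e e]
  have hsum : ∑ i, p i * ((e - ((A i ⬝ᵥ e) / (A i ⬝ᵥ V i)) • V i) ⬝ᵥ
        (e - ((A i ⬝ᵥ e) / (A i ⬝ᵥ V i)) • V i))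
      = ∑ i, (p i * (e ⬝ᵥ e)
          - ((p i / (A i ⬝ᵥ V i)) * (V i ⬝ᵥ e) * (A i ⬝ᵥ e)
            + (p i / (A i ⬝ᵥ V i)) * (A i ⬝ᵥ e) * (V i ⬝ᵥ e)
            - ((enorm' (V i)) ^ 2 / (A i ⬝ᵥ V i) * (p i / (A i ⬝ᵥ V i))) * (A i ⬝ᵥ e) * (A i ⬝ᵥ e))) := by
    refine Finset.sum_congr rfl fun i _ => ?_
    have h0 : (A i ⬝ᵥ V i) ≠ 0 := ne_of_gt (hav i)
    have hexp : (e - ((A i ⬝ᵥ e) / (A i ⬝ᵥ V i)) • V i) ⬝ᵥ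
        (e - ((A i ⬝ᵥ e) / (A i ⬝ᵥ V i)) • V i)
        = e ⬝ᵥ e - ((A i ⬝ᵥ e) / (A i ⬝ᵥ V i)) * (V i ⬝ᵥ e)
          - ((A i ⬝ᵥ e) / (A i ⬝ᵥ V i)) * (e ⬝ᵥ V i)
          + ((A i ⬝ᵥ e) / (A i ⬝ᵥ V i))^2 * (V i ⬝ᵥ V i) := by
      simp only [sub_dotProduct, dotProduct_sub, smul_dotProduct,
        dotProduct_smul, smul_eq_mul]
      ring
    rw [hexp, enorm'_sq, dotProduct_comm e (V i)]
    field_simp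
    ring
  rw [hsum, Finset.sum_sub_distrib, ← Finset.sum_mul, hps, one_mul]
  congr 1
  rw [Finset.sum_sub_distrib, Finset.sum_add_distrib]

lemma rkma_step_bound {m n : ℕ} (A V : Matrix (Fin m) (Fin n) ℝ) (p : Fin m → ℝ)
    (hps : ∑ i, p i = 1) (hav : ∀ i, 0 < A i ⬝ᵥ V i)
    (D S : Matrix (Fin m) (Fin m) ℝ)
    (hD : D = Matrix.diagonal (fun i => p i / (A i ⬝ᵥ V i)))
    (hS : S = Matrix.diagonal (fun i => (enorm' (V i)) ^ 2 / (A i ⬝ᵥ V i)))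
    (hM : (Vᵀ * D * A + Aᵀ * D * V - Aᵀ * S * D * A).IsHermitian)
    (lam : ℝ) (hlam : lam = ⨅ j, hM.eigenvalues j) (e : Fin n → ℝ) :
    ∑ i, p i * ((e - ((A i ⬝ᵥ e) / (A i ⬝ᵥ V i)) • V i) ⬝ᵥ
        (e - ((A i ⬝ᵥ e) / (A i ⬝ᵥ V i)) • V i))
      ≤ (1 - lam) * (e ⬝ᵥ e) := by
  rw [rkma_step_id A V p hps hav D S hD hS e]
  have hr := rayleigh_low hM e
  rw [← hlam] at hr
  have h2 : (1 - lam) * (e ⬝ᵥ e) = e ⬝ᵥ e - lam * (e ⬝ᵥ e) := by ring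
  rw [h2]
  linarith

theorem rkma_linear_convergence {m n : ℕ} (A V : Matrix (Fin m) (Fin n) ℝ)
    (p : Fin m → ℝ) (hp : ∀ i, 0 < p i) (hps : ∑ i, p i = 1)
    (hav : ∀ i, 0 < A i ⬝ᵥ V i)
    (b : Fin m → ℝ) (xhat : Fin n → ℝ) (hb : A.mulVec xhat = b)
    (x0 : Fin n → ℝ)
    (D S : Matrix (Fin m) (Fin m) ℝ)
    (hD : D = Matrix.diagonal (fun i => p i / (A i ⬝ᵥ V i)))
    (hS : S = Matrix.diagonal (fun i => (enorm' (V i)) ^ 2 / (A i ⬝ᵥ V i)))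
    (hM : (Vᵀ * D * A + Aᵀ * D * V - Aᵀ * S * D * A).IsHermitian)
    (lam : ℝ) (hlam : lam = ⨅ j, hM.eigenvalues j) (hlampos : 0 < lam) :
    (∀ k : ℕ,
      ∑ ω : Fin (k + 1) → Fin m, (∏ j, p (ω j)) *
          (enorm' (rkmaIter A V b x0 (k + 1) ω - xhat)) ^ 2
        ≤ (1 - lam) *
          ∑ ω : Fin k → Fin m, (∏ j, p (ω j)) *
            (enorm' (rkmaIter A V b x0 k ω - xhat)) ^ 2) ∧
    (∀ k : ℕ,
      ∑ ω : Fin k → Fin m, (∏ j, p (ω j)) *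
          (enorm' (rkmaIter A V b x0 k ω - xhat)) ^ 2
        ≤ (1 - lam) ^ k * (enorm' (x0 - xhat)) ^ 2) := by

  subst hb
  -- one-step bound in terms of the iterate
  have step : ∀ x : Fin n → ℝ,
      ∑ i, p i * (enorm' (x - ((A i ⬝ᵥ x - (A *ᵥ xhat) i) / (A i ⬝ᵥ V i)) • V i - xhat)) ^ 2
        ≤ (1 - lam) * (enorm' (x - xhat)) ^ 2 := by
    intro x
    have hv : ∀ i, x - ((A i ⬝ᵥ x - (A *ᵥ xhat) i) / (A i ⬝ᵥ V i)) • V i - xhat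
        = (x - xhat) - ((A i ⬝ᵥ (x - xhat)) / (A i ⬝ᵥ V i)) • V i := by
      intro i
      have hA : A i ⬝ᵥ x - (A *ᵥ xhat) i = A i ⬝ᵥ (x - xhat) := by
        rw [dotProduct_sub]; rfl
      rw [hA]
      abel
    simp only [hv, enorm'_sq]
    exact rkma_step_bound A V p hps hav D S hD hS hM lam hlam (x - xhat)
  -- lam ≤ 1
  have h1lam : 0 ≤ 1 - lam := by
    rcases Nat.eq_zero_or_pos n with hn | hn
    · exfalso
      subst hn
      rw [Real.iInf_of_isEmpty] at hlam
      linarith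
    · have hne : (0 : ℕ) < n := hn
      set x : Fin n → ℝ := Pi.single ⟨0, hne⟩ 1 with hx
      have hxx : x ⬝ᵥ x = 1 := by
        simp [hx, dotProduct, Pi.single_apply]
      have hr := rayleigh_low hM x
      rw [← hlam, hxx, mul_one] at hr
      have hid := rkma_step_id A V p hps hav D S hD hS x
      have hnn : 0 ≤ ∑ i, p i * ((x - ((A i ⬝ᵥ x) / (A i ⬝ᵥ V i)) • V i) ⬝ᵥ
          (x - ((A i ⬝ᵥ x) / (A i ⬝ᵥ V i)) • V i)) :=
        Finset.sum_nonneg fun i _ => mul_nonneg (hp i).le (dotProduct_self_nonneg' _)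
      rw [hid, hxx] at hnn
      linarith
  -- part 1
  have part1 : ∀ k : ℕ,
      ∑ ω : Fin (k + 1) → Fin m, (∏ j, p (ω j)) *
          (enorm' (rkmaIter A V (A *ᵥ xhat) x0 (k + 1) ω - xhat)) ^ 2
        ≤ (1 - lam) *
          ∑ ω : Fin k → Fin m, (∏ j, p (ω j)) *
            (enorm' (rkmaIter A V (A *ᵥ xhat) x0 k ω - xhat)) ^ 2 := by
    intro k
    rw [← Equiv.sum_comp (Fin.snocEquiv (fun _ : Fin (k + 1) => Fin m))
      (fun ω => (∏ j, p (ω j)) * (enorm' (rkmaIter A V (A *ᵥ xhat) x0 (k + 1) ω - xhat)) ^ 2),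
      Fintype.sum_prod_type, Finset.sum_comm, Finset.mul_sum]
    refine Finset.sum_le_sum fun ω' _ => ?_
    set x := rkmaIter A V (A *ᵥ xhat) x0 k ω' with hxdef
    have hiter : ∀ i : Fin m,
        rkmaIter A V (A *ᵥ xhat) x0 (k + 1) (Fin.snocEquiv (fun _ => Fin m) (i, ω'))
          = x - ((A i ⬝ᵥ x - (A *ᵥ xhat) i) / (A i ⬝ᵥ V i)) • V i := by
      intro i
      have hc : (fun j : Fin k => (Fin.snocEquiv (fun _ => Fin m) (i, ω')) j.castSucc) = ω' := by
        funext j; simp [Fin.snocEquiv]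
      have hl : (Fin.snocEquiv (fun _ => Fin m) (i, ω')) (Fin.last k) = i := by
        simp [Fin.snocEquiv]
      show (let y := rkmaIter A V (A *ᵥ xhat) x0 k
              (fun j => (Fin.snocEquiv (fun _ => Fin m) (i, ω')) j.castSucc);
            let i' := (Fin.snocEquiv (fun _ => Fin m) (i, ω')) (Fin.last k);
            y - ((A i' ⬝ᵥ y - (A *ᵥ xhat) i') / (A i' ⬝ᵥ V i')) • V i') = _
      simp only [hc, hl, hxdef]
    have hprod : ∀ i : Fin m,
        (∏ j, p ((Fin.snocEquiv (fun _ => Fin m) (i, ω')) j)) = (∏ j, p (ω' j)) * p i := by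
      intro i
      rw [Fin.prod_univ_castSucc]
      simp [Fin.snocEquiv]
    calc ∑ i, (∏ j, p ((Fin.snocEquiv (fun _ => Fin m) (i, ω')) j)) *
            (enorm' (rkmaIter A V (A *ᵥ xhat) x0 (k + 1)
              (Fin.snocEquiv (fun _ => Fin m) (i, ω')) - xhat)) ^ 2
        = (∏ j, p (ω' j)) * ∑ i, p i *
            (enorm' (x - ((A i ⬝ᵥ x - (A *ᵥ xhat) i) / (A i ⬝ᵥ V i)) • V i - xhat)) ^ 2 := by
          rw [Finset.mul_sum]
          exact Finset.sum_congr rfl fun i _ => by rw [hiter i, hprod i]; ring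
      _ ≤ (∏ j, p (ω' j)) * ((1 - lam) * (enorm' (x - xhat)) ^ 2) := by
          refine mul_le_mul_of_nonneg_left (step x) ?_
          exact Finset.prod_nonneg fun j _ => (hp _).le
      _ = (1 - lam) * ((∏ j, p (ω' j)) * (enorm' (x - xhat)) ^ 2) := by ring
  refine ⟨part1, ?_⟩
  intro k
  induction k with
  | zero =>
      rw [Fintype.sum_unique]
      simp [rkmaIter]
  | succ k ih =>
      calc ∑ ω : Fin (k + 1) → Fin m, (∏ j, p (ω j)) *
              (enorm' (rkmaIter A V (A *ᵥ xhat) x0 (k + 1) ω - xhat)) ^ 2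
          ≤ (1 - lam) * ∑ ω : Fin k → Fin m, (∏ j, p (ω j)) *
              (enorm' (rkmaIter A V (A *ᵥ xhat) x0 k ω - xhat)) ^ 2 := part1 k
        _ ≤ (1 - lam) * ((1 - lam) ^ k * (enorm' (x0 - xhat)) ^ 2) :=
            mul_le_mul_of_nonneg_left ih h1lam
        _ = (1 - lam) ^ (k + 1) * (enorm' (x0 - xhat)) ^ 2 := by ring
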